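/- Let s be a tree degree sequence of length n > 2 with l entries equal to 1. If l ≥ ⌈n/2⌉, then there exists a tree T with degree sequence s whose matching number equals n - l, and hence whose nullity equals 2l - n. -/

import Mathlib

open SimpleGraph Finset

def IsMatchingF {V : Type*} (G : SimpleGraph V) (M : Finset (Sym2 V)) : Prop :=
  (∀ e ∈ M, e ∈ G.edgeSet) ∧
  ∀ e ∈ M, ∀ f ∈ M, e ≠ f → ∀ v : V, ¬(v ∈ e ∧ v ∈ f)

noncomputable def matchNum {V : Type*} (G : SimpleGraph V) : ℕ :=
  sSup {k | ∃ M : Finset (Sym2 V), IsMatchingF G M ∧ M.card = k}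

noncomputable def degC {n : ℕ} (G : SimpleGraph (Fin n)) (v : Fin n) : ℕ := by
  classical exact G.degree v

/-- `G` has degree sequence `d 0, d 1, …, d (n-1)`. -/
def HasDegSeq {n : ℕ} (d : ℕ → ℕ) (G : SimpleGraph (Fin n)) : Prop :=
  ∃ σ : Equiv.Perm (Fin n), ∀ i : Fin n, degC G (σ i) = d i

/-- Nullity of the adjacency matrix over ℚ. -/
noncomputable def nullityC {n : ℕ} (G : SimpleGraph (Fin n)) : ℕ := by
  classical exact n - (G.adjMatrix ℚ).rank

/-- Annihilation number of the sequence `d` with respect to `n - 1` edges. -/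
noncomputable def annNumS (n : ℕ) (d : ℕ → ℕ) : ℕ :=
  sSup {a | a ≤ n ∧ (∑ i ∈ Finset.range a, d i) ≤ n - 1}

open Matrix

namespace TreeAux

/-- hypotheses bundle -/
structure Good (n : ℕ) (d : ℕ → ℕ) (l : ℕ) : Prop where
  hn : 2 < n
  hln : l < n
  hl2 : 2 ≤ l
  h2l : n ≤ 2 * l
  hsort : ∀ i j, i ≤ j → j < n → d i ≤ d j
  hd1 : ∀ i < l, d i = 1
  hd2 : ∀ k, l ≤ k → k < n → 2 ≤ d k
  hsumI : (∑ k ∈ Finset.Ico l n, d k) + l = 2 * n - 2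

variable (n : ℕ) (d : ℕ → ℕ) (l : ℕ)

def cap (k : ℕ) : ℕ := if k < l then 0 else if k = n - 1 then d k - 1 else d k - 2

def F (q : ℕ) : ℕ := ∑ k ∈ Finset.Ico q n, cap n d l k

def capTot (k : ℕ) : ℕ := if k = n - 1 then d k else d k - 1

def ic (q : ℕ) : ℕ :=
  min (F n d l q) (n - l - 1) - min (F n d l (q + 1)) (n - l - 1)

def lcap (k : ℕ) : ℕ := if k < l then 0 else capTot n d k - ic n d l k

def LF (q : ℕ) : ℕ := ∑ k ∈ Finset.Ico q n, lcap n d l k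

noncomputable def P (j : ℕ) : ℕ := sInf {q | F n d l (q + 1) ≤ n - 2 - j}

noncomputable def Q (j : ℕ) : ℕ := sInf {q | LF n d l (q + 1) ≤ j}

noncomputable def par (j : ℕ) : ℕ :=
  if j < l then Q n d l j else if j < n - 1 then P n d l j else j + 1

variable {n d l}

lemma F_zero {q : ℕ} (h : n ≤ q) : F n d l q = 0 := by
  unfold F
  rw [Finset.Ico_eq_empty (by omega), Finset.sum_empty]

lemma F_succ {q : ℕ} (h : q < n) : F n d l q = cap n d l q + F n d l (q + 1) := by
  unfold F
  rw [Finset.sum_eq_sum_Ico_succ_bot h]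

lemma F_anti : ∀ q, F n d l (q + 1) ≤ F n d l q := by
  intro q
  by_cases h : q < n
  · rw [F_succ h]; omega
  · rw [F_zero (by omega), F_zero (by omega)]

lemma F_anti' {q q' : ℕ} (h : q ≤ q') : F n d l q' ≤ F n d l q := by
  induction q', h using Nat.le_induction with
  | base => exact le_rfl
  | succ k hk ih => exact le_trans (F_anti k) ih

lemma KF (H : Good n d l) :
    ∀ q, l ≤ q → q < n → F n d l q + 2 * (n - q) = (∑ k ∈ Finset.Ico q n, d k) + 1 := by
  intro q hq hqn
  -- downward induction on n - 1 - q
  have key : ∀ t q, l ≤ q → q < n → n - 1 - q = t →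
      F n d l q + 2 * (n - q) = (∑ k ∈ Finset.Ico q n, d k) + 1 := by
    intro t
    induction t with
    | zero =>
      intro q hq hqn ht
      have hq1 : q = n - 1 := by omega
      subst hq1
      have h1 := F_succ (n := n) (d := d) (l := l) (q := n - 1) (by omega)
      rw [show n - 1 + 1 = n from by omega, F_zero le_rfl] at h1
      have hc : cap n d l (n - 1) = d (n - 1) - 1 := by
        unfold cap; rw [if_neg (by omega), if_pos rfl]
      have hd : 2 ≤ d (n - 1) := H.hd2 _ hq (by omega)
      have hs : ∑ k ∈ Finset.Ico (n - 1) n, d k = d (n - 1) := by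
        have he : Finset.Ico (n - 1) n = {n - 1} := by
          ext x; simp only [Finset.mem_Ico, Finset.mem_singleton]; omega
        rw [he, Finset.sum_singleton]
      rw [hs]; omega
    | succ t ih =>
      intro q hq hqn ht
      have hqn1 : q < n - 1 := by omega
      have h1 : F n d l q = cap n d l q + F n d l (q + 1) := F_succ (by omega)
      have hc : cap n d l q = d q - 2 := by
        unfold cap; rw [if_neg (by omega), if_neg (by omega)]
      have hd : 2 ≤ d q := H.hd2 _ hq (by omega)
      have hs : ∑ k ∈ Finset.Ico q n, d k = d q + ∑ k ∈ Finset.Ico (q + 1) n, d k :=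
        Finset.sum_eq_sum_Ico_succ_bot (by omega) _
      have := ih (q + 1) (by omega) (by omega) (by omega)
      omega
  exact key _ q hq hqn rfl

lemma F_at_l (H : Good n d l) : F n d l l + 1 = l := by
  have := KF H l le_rfl (by have := H.hln; omega)
  have hs := H.hsumI
  have h2l := H.h2l
  have hn := H.hn
  have hln := H.hln
  omega

/-- The key combinatorial inequality ensuring parents exist above each internal child. -/
lemma F_key (H : Good n d l) {j : ℕ} (hj : l ≤ j) (hjn : j < n - 1) :
    n - 1 - j ≤ F n d l (j + 1) := by
  have hkf := KF H (j + 1) (by omega) (by omega)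
  have hn := H.hn; have hln := H.hln; have h2l := H.h2l
  rcases Nat.lt_or_ge (d (j + 1)) 3 with h3 | h3
  · -- d (j+1) = 2, so all of [l, j+1) have degree 2
    have h2 : d (j + 1) = 2 := by
      have := H.hd2 (j + 1) (by omega) (by omega); omega
    have hlow : ∑ k ∈ Finset.Ico l (j + 1), d k = 2 * (j + 1 - l) := by
      have hall : ∀ k ∈ Finset.Ico l (j + 1), d k = 2 := by
        intro k hk
        simp only [Finset.mem_Ico] at hk
        have ha := H.hd2 k hk.1 (by omega)
        have hb := H.hsort k (j + 1) (by omega) (by omega)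
        omega
      rw [Finset.sum_congr rfl hall, Finset.sum_const, Nat.card_Ico, smul_eq_mul]
      omega
    have hsplit : (∑ k ∈ Finset.Ico l (j + 1), d k) + ∑ k ∈ Finset.Ico (j + 1) n, d k
        = ∑ k ∈ Finset.Ico l n, d k := Finset.sum_Ico_consecutive _ (by omega) (by omega)
    have hs := H.hsumI
    omega
  · -- all degrees from j+1 on are ≥ 3
    have hlarge : 3 * (n - (j + 1)) ≤ ∑ k ∈ Finset.Ico (j + 1) n, d k := by
      calc 3 * (n - (j + 1)) = ∑ _k ∈ Finset.Ico (j + 1) n, 3 := by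
            rw [Finset.sum_const, Nat.card_Ico, smul_eq_mul]; ring
        _ ≤ ∑ k ∈ Finset.Ico (j + 1) n, d k := by
            apply Finset.sum_le_sum
            intro k hk
            simp only [Finset.mem_Ico] at hk
            exact le_trans h3 (H.hsort (j + 1) k hk.1 hk.2)
    omega

/-! ### Properties of `P` -/

lemma P_le (j : ℕ) : P n d l j ≤ n - 1 := by
  apply Nat.sInf_le
  show F n d l (n - 1 + 1) ≤ n - 2 - j
  rcases Nat.lt_or_ge (n - 1 + 1) n with h | h
  ·
    omega
  · rw [F_zero h]; omega

lemma P_mem (j : ℕ) :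
    F n d l (P n d l j + 1) ≤ n - 2 - j := by
  have hne : {q | F n d l (q + 1) ≤ n - 2 - j}.Nonempty :=
    ⟨n - 1, by show F n d l (n - 1 + 1) ≤ n - 2 - j; rw [F_zero (by omega)]; omega⟩
  exact Nat.sInf_mem hne

lemma P_gt (H : Good n d l) {j : ℕ} (hj : l ≤ j) (hjn : j < n - 1) : j < P n d l j := by
  by_contra hc
  push_neg at hc
  have hmem := P_mem (n := n) (d := d) (l := l) j
  have h1 : F n d l (j + 1) ≤ F n d l (P n d l j + 1) := F_anti' (by omega)
  have h2 := F_key H hj hjn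
  omega

lemma P_char (H : Good n d l) {j q : ℕ} (hj : l ≤ j) (hjn : j < n - 1) :
    P n d l j = q ↔ (F n d l (q + 1) ≤ n - 2 - j ∧ n - 2 - j < F n d l q) := by
  constructor
  · rintro rfl
    refine ⟨P_mem j, ?_⟩
    have hgt := P_gt H hj hjn
    have hq1 : ¬ (F n d l (P n d l j - 1 + 1) ≤ n - 2 - j) := by
      intro hmem'
      have : P n d l j ≤ P n d l j - 1 :=
        Nat.sInf_le (show P n d l j - 1 ∈ {q | F n d l (q + 1) ≤ n - 2 - j} from hmem')
      omega
    have heq : P n d l j - 1 + 1 = P n d l j := by omega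
    rw [heq] at hq1
    omega
  · rintro ⟨h1, h2⟩
    have hle : P n d l j ≤ q :=
      Nat.sInf_le (show q ∈ {q | F n d l (q + 1) ≤ n - 2 - j} from h1)
    by_contra hne'
    have hlt : P n d l j < q := by omega
    have hmem := P_mem (n := n) (d := d) (l := l) j
    have : F n d l q ≤ F n d l (P n d l j + 1) := F_anti' (by omega)
    omega

/-- The number of internal children of `q`. -/
lemma ic_count (H : Good n d l) (q : ℕ) :
    ((Finset.Ico l (n - 1)).filter (fun j => P n d l j = q)).card = ic n d l q := by
  have hn := H.hn; have hln := H.hln; have h2l := H.h2l; have hl2 := H.hl2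
  have him : (Finset.Ico l (n - 1)).filter (fun j => P n d l j = q)
      = (Finset.Ico (min (F n d l (q + 1)) (n - l - 1)) (min (F n d l q) (n - l - 1))).image
          (fun t => n - 2 - t) := by
    ext j
    simp only [Finset.mem_filter, Finset.mem_Ico, Finset.mem_image]
    constructor
    · rintro ⟨⟨hj1, hj2⟩, hP⟩
      rw [P_char H hj1 hj2] at hP
      exact ⟨n - 2 - j, by omega, by omega⟩
    · rintro ⟨t, ht, rfl⟩
      have hj1 : l ≤ n - 2 - t := by omega
      have hj2 : n - 2 - t < n - 1 := by omega
      refine ⟨⟨hj1, hj2⟩, ?_⟩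
      rw [P_char H hj1 hj2]
      omega
  rw [him, Finset.card_image_of_injOn, Nat.card_Ico]
  · rfl
  · intro a ha b hb hab
    simp only [Finset.coe_Ico, Set.mem_Ico] at ha hb
    simp only at hab
    omega

lemma ic_le_cap (H : Good n d l) {q : ℕ} (h : q < n) : ic n d l q ≤ cap n d l q := by
  have := F_succ (n := n) (d := d) (l := l) (q := q) h
  unfold ic
  omega

lemma ic_zero {q : ℕ} (h : n ≤ q) : ic n d l q = 0 := by
  unfold ic
  rw [F_zero (by omega), F_zero (by omega)]
  omega

/-- telescoping sums of differences of an antitone function -/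
lemma telescope (g : ℕ → ℕ) (hg : ∀ k, g (k + 1) ≤ g k) (a b : ℕ) (hab : a ≤ b) :
    ∑ k ∈ Finset.Ico a b, (g k - g (k + 1)) = g a - g b := by
  have gmono : ∀ x y, x ≤ y → g y ≤ g x := by
    intro x y h
    induction y, h using Nat.le_induction with
    | base => exact le_rfl
    | succ k hk ih => exact le_trans (hg k) ih
  induction b, hab using Nat.le_induction with
  | base => simp
  | succ b hb ih =>
    rw [Finset.sum_Ico_succ_top hb, ih]
    have := gmono a b hb
    have := hg b
    omega

lemma ic_sum (H : Good n d l) : ∑ k ∈ Finset.Ico l n, ic n d l k = n - l - 1 := by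
  have hn := H.hn; have hln := H.hln; have h2l := H.h2l
  unfold ic
  rw [telescope (fun q => min (F n d l q) (n - l - 1)) (fun k => by
      have := F_anti (n := n) (d := d) (l := l) k; omega) l n (by omega)]
  have h1 := F_at_l H
  have h2 : F n d l n = 0 := F_zero le_rfl
  omega

/-! ### Properties of `lcap`, `LF` -/

lemma lcap_ic (H : Good n d l) {k : ℕ} (hk1 : l ≤ k) (hk2 : k < n) :
    lcap n d l k + ic n d l k = capTot n d k ∧ 1 ≤ lcap n d l k := by
  have hic := ic_le_cap H hk2
  have hd1 := H.hd2 k hk1 hk2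
  have hcap : cap n d l k = (if k = n - 1 then d k - 1 else d k - 2) := by
    unfold cap; rw [if_neg (by omega)]
  have hct : capTot n d k = (if k = n - 1 then d k else d k - 1) := rfl
  have hlc : lcap n d l k = capTot n d k - ic n d l k := by
    unfold lcap; rw [if_neg (by omega)]
  by_cases h : k = n - 1
  · rw [if_pos h] at hcap hct; omega
  · rw [if_neg h] at hcap hct; omega

lemma lcap_pos (H : Good n d l) {k : ℕ} (hk1 : l ≤ k) (hk2 : k < n) :
    1 ≤ lcap n d l k := (lcap_ic H hk1 hk2).2

lemma LF_zero {q : ℕ} (h : n ≤ q) : LF n d l q = 0 := by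
  unfold LF
  rw [Finset.Ico_eq_empty (by omega), Finset.sum_empty]

lemma LF_succ {q : ℕ} (h : q < n) : LF n d l q = lcap n d l q + LF n d l (q + 1) := by
  unfold LF
  rw [Finset.sum_eq_sum_Ico_succ_bot h]

lemma LF_anti : ∀ q, LF n d l (q + 1) ≤ LF n d l q := by
  intro q
  by_cases h : q < n
  · rw [LF_succ h]; omega
  · rw [LF_zero (by omega), LF_zero (by omega)]

lemma LF_anti' {q q' : ℕ} (h : q ≤ q') : LF n d l q' ≤ LF n d l q := by
  induction q', h using Nat.le_induction with
  | base => exact le_rfl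
  | succ k hk ih => exact le_trans (LF_anti k) ih

lemma capTot_sum (H : Good n d l) : ∑ k ∈ Finset.Ico l n, capTot n d k = n - 1 := by
  have hn := H.hn; have hln := H.hln
  have hsing : Finset.Ico (n - 1) n = {n - 1} := by
    ext x; simp only [Finset.mem_Ico, Finset.mem_singleton]; omega
  have hspc : (∑ k ∈ Finset.Ico l (n - 1), capTot n d k)
      + ∑ k ∈ Finset.Ico (n - 1) n, capTot n d k = ∑ k ∈ Finset.Ico l n, capTot n d k :=
    Finset.sum_Ico_consecutive _ (by omega) (by omega)
  have hspd : (∑ k ∈ Finset.Ico l (n - 1), d k)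
      + ∑ k ∈ Finset.Ico (n - 1) n, d k = ∑ k ∈ Finset.Ico l n, d k :=
    Finset.sum_Ico_consecutive _ (by omega) (by omega)
  rw [hsing, Finset.sum_singleton] at hspc hspd
  have htop : capTot n d (n - 1) = d (n - 1) := if_pos rfl
  have hone : (∑ k ∈ Finset.Ico l (n - 1), capTot n d k) + (n - 1 - l)
      = ∑ k ∈ Finset.Ico l (n - 1), d k := by
    have h1 : n - 1 - l = ∑ _k ∈ Finset.Ico l (n - 1), 1 := by
      rw [Finset.sum_const, Nat.card_Ico, smul_eq_mul, mul_one]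
    rw [h1, ← Finset.sum_add_distrib]
    apply Finset.sum_congr rfl
    intro k hk
    simp only [Finset.mem_Ico] at hk
    have := H.hd2 k hk.1 (by omega)
    unfold capTot
    rw [if_neg (by omega)]
    omega
  have hs := H.hsumI
  omega

lemma LF_at_l (H : Good n d l) : LF n d l l = l := by
  have hn := H.hn; have hln := H.hln; have h2l := H.h2l
  have hadd : (∑ k ∈ Finset.Ico l n, lcap n d l k) + ∑ k ∈ Finset.Ico l n, ic n d l k
      = ∑ k ∈ Finset.Ico l n, capTot n d k := by
    rw [← Finset.sum_add_distrib]
    apply Finset.sum_congr rfl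
    intro k hk
    simp only [Finset.mem_Ico] at hk
    exact (lcap_ic H hk.1 hk.2).1
  have h1 := ic_sum H
  have h2 := capTot_sum H
  unfold LF
  omega

lemma LF_le_l (H : Good n d l) {q : ℕ} (hq : l ≤ q) : LF n d l q ≤ l := by
  have := LF_anti' (n := n) (d := d) (l := l) hq
  rw [LF_at_l H] at this
  exact this

lemma LF_lt_l (H : Good n d l) {q : ℕ} (hq : l < q) : LF n d l q < l := by
  have hln := H.hln
  have h1 : LF n d l q ≤ LF n d l (l + 1) := LF_anti' (by omega)
  have h2 : LF n d l l = lcap n d l l + LF n d l (l + 1) := LF_succ (by omega)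
  have h3 := lcap_pos H (le_refl l) (by omega)
  have h4 := LF_at_l H
  omega

lemma LF_eq_l_below (H : Good n d l) {q : ℕ} (hq : q ≤ l) : LF n d l q = l := by
  have hz : ∑ k ∈ Finset.Ico q l, lcap n d l k = 0 := by
    apply Finset.sum_eq_zero
    intro k hk
    simp only [Finset.mem_Ico] at hk
    unfold lcap
    rw [if_pos hk.2]
  have hsp : (∑ k ∈ Finset.Ico q l, lcap n d l k) + ∑ k ∈ Finset.Ico l n, lcap n d l k
      = ∑ k ∈ Finset.Ico q n, lcap n d l k :=
    Finset.sum_Ico_consecutive _ hq (by have := H.hln; omega)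
  have h4 := LF_at_l H
  unfold LF at h4 ⊢
  omega

lemma Q_mem (j : ℕ) : LF n d l (Q n d l j + 1) ≤ j := by
  have hne : {q | LF n d l (q + 1) ≤ j}.Nonempty :=
    ⟨n - 1, by show LF n d l (n - 1 + 1) ≤ j; rw [LF_zero (by omega)]; omega⟩
  exact Nat.sInf_mem hne

lemma Q_ge (H : Good n d l) {j : ℕ} (hj : j < l) : l ≤ Q n d l j := by
  by_contra hc
  push_neg at hc
  have hmem := Q_mem (n := n) (d := d) (l := l) j
  rw [LF_eq_l_below H (by omega)] at hmem
  omega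

lemma Q_le (j : ℕ) : Q n d l j ≤ n - 1 := by
  apply Nat.sInf_le
  show LF n d l (n - 1 + 1) ≤ j
  rw [LF_zero (by omega)]
  omega

lemma Q_char (H : Good n d l) {j q : ℕ} (hj : j < l) :
    Q n d l j = q ↔ (LF n d l (q + 1) ≤ j ∧ j < LF n d l q) := by
  have hl2 := H.hl2
  constructor
  · rintro rfl
    refine ⟨Q_mem j, ?_⟩
    have hgt := Q_ge H hj
    have hq1 : ¬ (LF n d l (Q n d l j - 1 + 1) ≤ j) := by
      intro hmem'
      have : Q n d l j ≤ Q n d l j - 1 :=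
        Nat.sInf_le (show Q n d l j - 1 ∈ {q | LF n d l (q + 1) ≤ j} from hmem')
      omega
    have heq : Q n d l j - 1 + 1 = Q n d l j := by omega
    rw [heq] at hq1
    omega
  · rintro ⟨h1, h2⟩
    have hle : Q n d l j ≤ q :=
      Nat.sInf_le (show q ∈ {q | LF n d l (q + 1) ≤ j} from h1)
    by_contra hne'
    have hlt : Q n d l j < q := by omega
    have hmem := Q_mem (n := n) (d := d) (l := l) j
    have : LF n d l q ≤ LF n d l (Q n d l j + 1) := LF_anti' (by omega)
    omega

lemma Q_count (H : Good n d l) {q : ℕ} (hq1 : l ≤ q) (hq2 : q < n) :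
    ((Finset.range l).filter (fun j => Q n d l j = q)).card = lcap n d l q := by
  have hle := LF_le_l H hq1
  have hfil : (Finset.range l).filter (fun j => Q n d l j = q)
      = Finset.Ico (LF n d l (q + 1)) (LF n d l q) := by
    ext j
    simp only [Finset.mem_filter, Finset.mem_range, Finset.mem_Ico]
    constructor
    · rintro ⟨hj, hQ⟩
      rw [Q_char H hj] at hQ
      exact hQ
    · rintro ⟨h1, h2⟩
      have hj : j < l := by omega
      exact ⟨hj, (Q_char H hj).2 ⟨h1, h2⟩⟩
  rw [hfil, Nat.card_Ico]
  have := LF_succ (n := n) (d := d) (l := l) (q := q) hq2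
  omega

lemma Q_hit (H : Good n d l) {q : ℕ} (hq1 : l ≤ q) (hq2 : q < n) :
    Q n d l (LF n d l (q + 1)) = q ∧ LF n d l (q + 1) < l := by
  have hlt : LF n d l (q + 1) < l := LF_lt_l H (by omega)
  refine ⟨(Q_char H hlt).2 ⟨le_rfl, ?_⟩, hlt⟩
  have := LF_succ (n := n) (d := d) (l := l) (q := q) hq2
  have := lcap_pos H hq1 hq2
  omega

/-! ### Properties of `par` -/

lemma par_gt (H : Good n d l) (j : ℕ) : j < par n d l j := by
  unfold par
  split_ifs with h1 h2
  · have := Q_ge H h1; omega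
  · exact P_gt H (by omega) h2
  · omega

lemma par_lt_n (H : Good n d l) {j : ℕ} (h : j < n - 1) : par n d l j ≤ n - 1 := by
  unfold par
  split_ifs with h1
  · exact Q_le j
  · exact P_le j

lemma par_big (H : Good n d l) {j : ℕ} (h : n - 1 ≤ j) : par n d l j = j + 1 := by
  have hln := H.hln
  unfold par
  rw [if_neg (show ¬ j < l by omega), if_neg (show ¬ j < n - 1 by omega)]

lemma par_ge_l (H : Good n d l) {j : ℕ} (h : j < n - 1) : l ≤ par n d l j := by
  unfold par
  split_ifs with h1
  · exact Q_ge H h1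
  · have := P_gt H (by omega) h; omega

lemma child_count_internal (H : Good n d l) {q : ℕ} (hq1 : l ≤ q) (hq2 : q < n) :
    ((Finset.range n).filter (fun j => par n d l j = q)).card
      = lcap n d l q + ic n d l q := by
  have hln := H.hln
  have hun : (Finset.range n).filter (fun j => par n d l j = q)
      = ((Finset.range l).filter (fun j => Q n d l j = q))
        ∪ ((Finset.Ico l (n - 1)).filter (fun j => P n d l j = q)) := by
    ext j
    simp only [Finset.mem_filter, Finset.mem_range, Finset.mem_union, Finset.mem_Ico]
    unfold par
    constructor
    · rintro ⟨hj, hp⟩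
      split_ifs at hp with h1 h2
      · exact Or.inl ⟨h1, hp⟩
      · exact Or.inr ⟨⟨by omega, h2⟩, hp⟩
      · omega
    · rintro (⟨h1, hp⟩ | ⟨⟨h1, h2⟩, hp⟩)
      · rw [if_pos h1]; exact ⟨by omega, hp⟩
      · rw [if_neg (by omega), if_pos h2]; exact ⟨by omega, hp⟩
  rw [hun, Finset.card_union_of_disjoint, Q_count H hq1 hq2, ic_count H q]
  rw [Finset.disjoint_left]
  intro a ha hb
  simp only [Finset.mem_filter, Finset.mem_range, Finset.mem_Ico] at ha hb
  omega

lemma child_count_leaf (H : Good n d l) {q : ℕ} (hq : q < l) :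
    ((Finset.range n).filter (fun j => par n d l j = q)).card = 0 := by
  have hln := H.hln
  rw [Finset.card_eq_zero]
  rw [Finset.filter_eq_empty_iff]
  intro j hj
  simp only [Finset.mem_range] at hj
  intro hp
  rcases Nat.lt_or_ge j (n - 1) with h | h
  · have := par_ge_l H h; omega
  · rw [par_big H h] at hp; omega

/-! ### The graph -/

variable (n d l) in
def Gr : SimpleGraph (Fin n) where
  Adj u v := (u : ℕ) ≠ (v : ℕ) ∧ (par n d l ↑u = ↑v ∨ par n d l ↑v = ↑u)
  symm := by
    refine ⟨fun u v h => ?_⟩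
    exact ⟨h.1.symm, h.2.symm⟩
  loopless := ⟨fun u h => h.1 rfl⟩

noncomputable instance : DecidableRel (Gr n d l).Adj := fun u v =>
  inferInstanceAs (Decidable (_ ∧ (_ ∨ _)))

lemma adj_iff {u v : Fin n} : (Gr n d l).Adj u v ↔
    ((u : ℕ) ≠ (v : ℕ) ∧ (par n d l ↑u = ↑v ∨ par n d l ↑v = ↑u)) := Iff.rfl

variable (n d l) in
noncomputable def parFin (v : Fin n) : Fin n :=
  if h : par n d l ↑v < n then ⟨par n d l ↑v, h⟩ else v

lemma parFin_val (H : Good n d l) {v : Fin n} (h : (v : ℕ) < n - 1) :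
    (parFin n d l v : ℕ) = par n d l ↑v := by
  unfold parFin
  rw [dif_pos (by have := par_lt_n H h; omega)]

lemma adj_parFin (H : Good n d l) {v : Fin n} (h : (v : ℕ) < n - 1) :
    (Gr n d l).Adj v (parFin n d l v) := by
  rw [adj_iff]
  have hval := parFin_val H h
  have hgt := par_gt H (v : ℕ)
  exact ⟨by omega, Or.inl hval.symm⟩

lemma card_filter_fin (n : ℕ) (p : ℕ → Prop) [DecidablePred p] :
    ((Finset.univ : Finset (Fin n)).filter (fun w => p w.val)).card
      = ((Finset.range n).filter p).card := by
  apply Finset.card_bij (fun (w : Fin n) _ => (w : ℕ))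
  · intro a ha
    simp only [Finset.mem_filter, Finset.mem_univ, true_and] at ha
    simp only [Finset.mem_filter, Finset.mem_range]
    exact ⟨a.isLt, ha⟩
  · intro a _ b _ hab
    exact Fin.val_injective hab
  · intro b hb
    simp only [Finset.mem_filter, Finset.mem_range] at hb
    exact ⟨⟨b, hb.1⟩, by simp [hb.2], rfl⟩

lemma degree_split (H : Good n d l) (v : Fin n) :
    (Gr n d l).degree v = (if par n d l ↑v < n then 1 else 0)
      + ((Finset.range n).filter (fun j => par n d l j = (v : ℕ))).card := by
  rw [SimpleGraph.degree, neighborFinset_eq_filter]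
  have hpred : (Finset.univ : Finset (Fin n)).filter ((Gr n d l).Adj v)
      = ((Finset.univ : Finset (Fin n)).filter (fun w => par n d l ↑v = w.val))
        ∪ ((Finset.univ : Finset (Fin n)).filter (fun w => par n d l w.val = (v : ℕ))) := by
    ext w
    simp only [Finset.mem_filter, Finset.mem_univ, true_and, Finset.mem_union, adj_iff]
    constructor
    · rintro ⟨_, h | h⟩
      · exact Or.inl h
      · exact Or.inr h
    · rintro (h | h)
      · have := par_gt H (v : ℕ); exact ⟨by omega, Or.inl h⟩
      · have := par_gt H (w : ℕ); exact ⟨by omega, Or.inr h⟩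
  rw [hpred, Finset.card_union_of_disjoint]
  · congr 1
    · by_cases h : par n d l ↑v < n
      · rw [if_pos h]
        have : (Finset.univ : Finset (Fin n)).filter (fun w => par n d l ↑v = w.val)
            = {(⟨par n d l ↑v, h⟩ : Fin n)} := by
          ext w
          simp only [Finset.mem_filter, Finset.mem_univ, true_and, Finset.mem_singleton]
          constructor
          · intro hw; exact Fin.ext hw.symm
          · rintro rfl; rfl
        rw [this, Finset.card_singleton]
      · rw [if_neg h]
        rw [Finset.card_eq_zero, Finset.filter_eq_empty_iff]
        intro w _
        have := w.isLt
        omega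
    · exact card_filter_fin n (fun j => par n d l j = (v : ℕ))
  · rw [Finset.disjoint_left]
    intro a ha hb
    simp only [Finset.mem_filter, Finset.mem_univ, true_and] at ha hb
    have h1 := par_gt H (v : ℕ)
    have h2 := par_gt H (a : ℕ)
    omega

lemma degree_eq (H : Good n d l) (v : Fin n) : (Gr n d l).degree v = d ↑v := by
  have hln := H.hln
  have hv := v.isLt
  rw [degree_split H]
  rcases Nat.lt_or_ge (v : ℕ) l with h | h
  · -- leaf
    rw [child_count_leaf H h]
    have hq : par n d l ↑v = Q n d l ↑v := by unfold par; rw [if_pos h]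
    have hql := Q_le (n := n) (d := d) (l := l) (v : ℕ)
    rw [if_pos (by omega)]
    rw [H.hd1 _ h]
  · -- internal
    rw [child_count_internal H h hv]
    have hli := lcap_ic H h hv
    have hd2 := H.hd2 _ h hv
    have hct : capTot n d ↑v = (if (v : ℕ) = n - 1 then d ↑v else d ↑v - 1) := rfl
    by_cases hv1 : (v : ℕ) < n - 1
    · have hpn := par_lt_n H hv1
      rw [if_pos (show par n d l ↑v < n by omega)]
      rw [if_neg (show ¬ (v : ℕ) = n - 1 by omega)] at hct
      omega
    · have hpb : par n d l ↑v = ↑v + 1 := par_big H (by omega)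
      rw [if_neg (show ¬ par n d l ↑v < n by omega)]
      rw [if_pos (show (v : ℕ) = n - 1 by omega)] at hct
      omega

/-! ### Connectivity -/

lemma connected (H : Good n d l) : (Gr n d l).Connected := by
  have hn := H.hn
  set r : Fin n := ⟨n - 1, by omega⟩ with hr
  have key : ∀ (k : ℕ) (v : Fin n), n - 1 - (v : ℕ) ≤ k → (Gr n d l).Reachable v r := by
    intro k
    induction k with
    | zero =>
      intro v hv
      have hv' := v.isLt
      have : v = r := Fin.ext (by simp only [hr]; omega)
      rw [this]
    | succ k ih =>
      intro v hv
      by_cases hveq : (v : ℕ) = n - 1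
      · have : v = r := Fin.ext (by simp only [hr]; omega)
        rw [this]
      · have hvlt : (v : ℕ) < n - 1 := by have := v.isLt; omega
        have hadj := adj_parFin H hvlt
        have hval := parFin_val H hvlt
        have hgt := par_gt H (v : ℕ)
        exact (hadj.reachable).trans (ih (parFin n d l v) (by omega))
  rw [connected_iff]
  refine ⟨fun u v => (key n u (by omega)).trans (key n v (by omega)).symm, ⟨⟨0, by omega⟩⟩⟩

/-! ### Acyclicity -/

lemma isBridge_par (H : Good n d l) {v w : Fin n} (hadj : (Gr n d l).Adj v w)
    (hpar : par n d l ↑v = ↑w) : (Gr n d l).IsBridge s(v, w) := by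
  rw [isBridge_iff_adj_and_forall_walk_mem_edges]
  have hiter : ∀ (k : ℕ) (x : ℕ), x ≤ (par n d l)^[k] x := by
    intro k
    induction k with
    | zero => intro x; simp
    | succ k ih =>
      intro x
      rw [Function.iterate_succ_apply]
      have h1 := par_gt H x
      have h2 := ih (par n d l x)
      omega
  have hdescw : ¬ ∃ k, (par n d l)^[k] (w : ℕ) = (v : ℕ) := by
    rintro ⟨k, hk⟩
    have := hiter k (w : ℕ)
    have := par_gt H (v : ℕ)
    omega
  have claim : ∀ (x y : Fin n) (p : (Gr n d l).Walk x y),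
      (∃ k, (par n d l)^[k] (x : ℕ) = (v : ℕ)) → ¬ (∃ k, (par n d l)^[k] (y : ℕ) = (v : ℕ)) →
      s(v, w) ∈ p.edges := by
    intro x y p
    induction p with
    | nil => intro hx hy; exact absurd hx hy
    | @cons a b c hab q ih =>
      intro hx hy
      rw [SimpleGraph.Walk.edges_cons]
      by_cases hb : ∃ k, (par n d l)^[k] (b : ℕ) = (v : ℕ)
      · exact List.mem_cons_of_mem _ (ih hb hy)
      · rcases (adj_iff.1 hab).2 with h1 | h2
        · -- par a = b
          obtain ⟨k, hk⟩ := hx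
          cases k with
          | zero =>
            simp only [Function.iterate_zero, id_eq] at hk
            have hav : a = v := Fin.ext hk
            have hbw : b = w := Fin.ext (by rw [← h1, hk, hpar])
            have heq : s(a, b) = s(v, w) := by rw [hav, hbw]
            rw [heq]
            exact List.mem_cons_self
          | succ k' =>
            exfalso
            apply hb
            refine ⟨k', ?_⟩
            rw [Function.iterate_succ_apply, h1] at hk
            exact hk
        · -- par b = a
          exfalso
          apply hb
          obtain ⟨k, hk⟩ := hx
          exact ⟨k + 1, by rw [Function.iterate_succ_apply, h2, hk]⟩
  intro p
  apply claim v w p ⟨0, by simp⟩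
  exact hdescw

lemma acyclic (H : Good n d l) : (Gr n d l).IsAcyclic := by
  rw [isAcyclic_iff_forall_adj_isBridge]
  intro v w hadj
  rcases (adj_iff.1 hadj).2 with h1 | h2
  · exact isBridge_par H hadj h1
  · rw [Sym2.eq_swap]
    exact isBridge_par H hadj.symm h2

lemma isTree (H : Good n d l) : (Gr n d l).IsTree :=
  ⟨connected H, acyclic H⟩

/-! ### Matching -/

variable (n d l) in
noncomputable def cleaf (v : Fin n) : Fin n :=
  ⟨min (LF n d l (v.val + 1)) (n - 1), by have := v.isLt; omega⟩

lemma cleaf_val (H : Good n d l) {v : Fin n} (hv : l ≤ v.val) :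
    (cleaf n d l v).val = LF n d l (v.val + 1) ∧ LF n d l (v.val + 1) < l := by
  have hlt : LF n d l (v.val + 1) < l := LF_lt_l H (by omega)
  have hln := H.hln
  constructor
  · show min (LF n d l (v.val + 1)) (n - 1) = LF n d l (v.val + 1)
    omega
  · exact hlt

lemma adj_cleaf (H : Good n d l) {v : Fin n} (hv : l ≤ v.val) :
    (Gr n d l).Adj v (cleaf n d l v) := by
  obtain ⟨hval, hlt⟩ := cleaf_val H hv
  have hQ := (Q_hit H hv v.isLt).1
  rw [adj_iff]
  refine ⟨by omega, Or.inr ?_⟩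
  rw [hval]
  unfold par
  rw [if_pos hlt, hQ]

lemma cleaf_inj (H : Good n d l) {u v : Fin n} (hu : l ≤ u.val) (hv : l ≤ v.val)
    (h : (cleaf n d l u).val = (cleaf n d l v).val) : u = v := by
  obtain ⟨hval1, _⟩ := cleaf_val H hu
  obtain ⟨hval2, _⟩ := cleaf_val H hv
  rw [hval1, hval2] at h
  have key : ∀ (a b : Fin n), l ≤ a.val → l ≤ b.val → a.val < b.val →
      LF n d l (a.val + 1) ≠ LF n d l (b.val + 1) := by
    intro a b ha hb hab
    have h1 : LF n d l (a.val + 1) = lcap n d l (a.val + 1) + LF n d l (a.val + 2) :=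
      LF_succ (by have := b.isLt; omega)
    have h2 : 1 ≤ lcap n d l (a.val + 1) := lcap_pos H (by omega) (by have := b.isLt; omega)
    have h3 : LF n d l (b.val + 1) ≤ LF n d l (a.val + 2) := LF_anti' (by omega)
    omega
  rcases lt_trichotomy u.val v.val with hlt | heq | hgt
  · exact absurd h (key u v hu hv hlt)
  · exact Fin.ext heq
  · exact absurd h.symm (key v u hv hu hgt)

variable (n d l) in
noncomputable def Mtch : Finset (Sym2 (Fin n)) :=
  ((Finset.univ : Finset (Fin n)).filter (fun v => l ≤ v.val)).image
    (fun v => s(v, cleaf n d l v))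

lemma internal_card (H : Good n d l) :
    ((Finset.univ : Finset (Fin n)).filter (fun v : Fin n => l ≤ v.val)).card = n - l := by
  rw [card_filter_fin n (fun j => l ≤ j)]
  have : (Finset.range n).filter (fun j => l ≤ j) = Finset.Ico l n := by
    ext j
    simp only [Finset.mem_filter, Finset.mem_range, Finset.mem_Ico]
    omega
  rw [this, Nat.card_Ico]

lemma Mtch_card (H : Good n d l) : (Mtch n d l).card = n - l := by
  unfold Mtch
  rw [Finset.card_image_of_injOn, internal_card H]
  intro u hu v hv huv
  simp only [Finset.coe_filter, Set.mem_setOf_eq, Finset.mem_univ, true_and] at hu hv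
  rw [Sym2.eq_iff] at huv
  rcases huv with ⟨h1, _⟩ | ⟨h1, h2⟩
  · exact h1
  · -- u = cleaf v : impossible since cleaf is a leaf
    obtain ⟨_, hlt⟩ := cleaf_val H hv
    obtain ⟨hval2, _⟩ := cleaf_val H hv
    have : u.val < l := by rw [h1, hval2]; exact hlt
    omega

lemma Mtch_isMatching (H : Good n d l) : IsMatchingF (Gr n d l) (Mtch n d l) := by
  constructor
  · intro e he
    unfold Mtch at he
    simp only [Finset.mem_image, Finset.mem_filter, Finset.mem_univ, true_and] at he
    obtain ⟨v, hv, rfl⟩ := he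
    rw [SimpleGraph.mem_edgeSet]
    exact adj_cleaf H hv
  · intro e he f hf hef x hx
    unfold Mtch at he hf
    simp only [Finset.mem_image, Finset.mem_filter, Finset.mem_univ, true_and] at he hf
    obtain ⟨u, hu, rfl⟩ := he
    obtain ⟨v, hv, rfl⟩ := hf
    obtain ⟨hcu, hcul⟩ := cleaf_val H hu
    obtain ⟨hcv, hcvl⟩ := cleaf_val H hv
    have huv : u ≠ v := fun h => hef (by rw [h])
    simp only [Sym2.mem_iff] at hx
    obtain ⟨h1 | h1, h2 | h2⟩ := hx
    · exact huv (h1 ▸ h2 ▸ rfl)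
    · -- x = u and x = cleaf v
      have hx2 : u = cleaf n d l v := by rw [← h1]; exact h2
      have hx3 := congrArg Fin.val hx2
      omega
    · have hx2 : v = cleaf n d l u := by rw [← h2]; exact h1
      have hx3 := congrArg Fin.val hx2
      omega
    · apply huv
      apply cleaf_inj H hu hv
      rw [← h1, ← h2]

lemma matching_upper (H : Good n d l) (M : Finset (Sym2 (Fin n)))
    (hM : IsMatchingF (Gr n d l) M) : M.card ≤ n - l := by
  classical
  set g : Sym2 (Fin n) → Fin n := Sym2.lift ⟨fun a b => max a b, fun a b => max_comm a b⟩
    with hg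
  have hprop : ∀ e ∈ (Gr n d l).edgeSet, g e ∈ e ∧ l ≤ (g e).val := by
    intro e
    induction e using Sym2.ind with
    | _ a b =>
      intro he
      rw [SimpleGraph.mem_edgeSet] at he
      have hmain : ∀ (a b : Fin n), par n d l a.val = b.val →
          g s(a, b) ∈ s(a, b) ∧ l ≤ (g s(a, b)).val := by
        intro a b hpar
        have hgt : a.val < b.val := by have := par_gt H a.val; omega
        have hab : a ≤ b := by rw [Fin.le_def]; omega
        have hmax : g s(a, b) = b := by
          rw [hg, Sym2.lift_mk]
          exact max_eq_right hab
        have han : a.val < n - 1 := by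
          by_contra hc
          push_neg at hc
          rw [par_big H hc] at hpar
          have := b.isLt
          have := a.isLt
          omega
        have := par_ge_l H han
        rw [hmax]
        refine ⟨Sym2.mem_mk_right a b, by omega⟩
      rcases (adj_iff.1 he).2 with h1 | h2
      · exact hmain a b h1
      · rw [Sym2.eq_swap]
        exact hmain b a h2
  have hinj : Set.InjOn g M := by
    intro e he f hf hgef
    by_contra hef
    have he' := hprop e (hM.1 e he)
    have hf' := hprop f (hM.1 f hf)
    exact hM.2 e he f hf hef (g e) ⟨he'.1, hgef ▸ hf'.1⟩
  calc M.card = (M.image g).card := (Finset.card_image_of_injOn hinj).symm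
    _ ≤ ((Finset.univ : Finset (Fin n)).filter (fun v : Fin n => l ≤ v.val)).card := by
        apply Finset.card_le_card
        intro x hx
        simp only [Finset.mem_image] at hx
        obtain ⟨e, he, rfl⟩ := hx
        simp only [Finset.mem_filter, Finset.mem_univ, true_and]
        exact (hprop e (hM.1 e he)).2
    _ = n - l := internal_card H

lemma matchNum_eq (H : Good n d l) : matchNum (Gr n d l) = n - l := by
  unfold matchNum
  have hub : (n - l) ∈ upperBounds {k | ∃ M : Finset (Sym2 (Fin n)),
      IsMatchingF (Gr n d l) M ∧ M.card = k} := by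
    rintro k ⟨M, hM, rfl⟩
    exact matching_upper H M hM
  have hmem : (n - l) ∈ {k | ∃ M : Finset (Sym2 (Fin n)),
      IsMatchingF (Gr n d l) M ∧ M.card = k} := ⟨Mtch n d l, Mtch_isMatching H, Mtch_card H⟩
  exact le_antisymm (csSup_le ⟨n - l, hmem⟩ (fun k hk => hub hk)) (le_csSup ⟨n - l, hub⟩ hmem)

/-! ### Rank of the adjacency matrix -/

lemma par_cleaf (H : Good n d l) {v : Fin n} (hv : l ≤ v.val) :
    par n d l (cleaf n d l v).val = v.val := by
  obtain ⟨hval, hlt⟩ := cleaf_val H hv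
  rw [hval]
  unfold par
  rw [if_pos hlt]
  exact (Q_hit H hv v.isLt).1

lemma adj_leaf_iff (H : Good n d l) {i q : Fin n} (hq : q.val < l) :
    (Gr n d l).Adj i q ↔ par n d l q.val = i.val := by
  have hln := H.hln
  rw [adj_iff]
  constructor
  · rintro ⟨hne, h | h⟩
    · exfalso
      rcases Nat.lt_or_ge i.val (n - 1) with hi | hi
      · have := par_ge_l H hi; omega
      · rw [par_big H hi] at h; have := i.isLt; omega
    · exact h
  · intro h
    have := par_gt H q.val
    exact ⟨by omega, Or.inr h⟩

lemma not_adj_leaves (H : Good n d l) {u v : Fin n} (hu : u.val < l) (hv : v.val < l) :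
    ¬ (Gr n d l).Adj u v := by
  intro h
  rw [adj_leaf_iff H hv] at h
  have hln := H.hln
  have hvn : v.val < n - 1 := by omega
  have := par_ge_l H hvn
  omega

lemma rank_eq (H : Good n d l) : ((Gr n d l).adjMatrix ℚ).rank = 2 * (n - l) := by
  classical
  have hn := H.hn; have hln := H.hln
  set A := (Gr n d l).adjMatrix ℚ with hA
  set m := n - l with hm
  -- index maps
  have hfI : ∀ k : Fin m, l + k.val < n := fun k => by have := k.isLt; omega
  set fI : Fin m → Fin n := fun k => ⟨l + k.val, hfI k⟩ with hfIdef
  set fL : Fin m → Fin n := fun k => cleaf n d l (fI k) with hfLdef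
  have hfIl : ∀ k, l ≤ (fI k).val := fun k => by simp [hfIdef]
  have hfLval : ∀ k, (fL k).val = LF n d l ((fI k).val + 1) ∧ (fL k).val < l := by
    intro k
    obtain ⟨h1, h2⟩ := cleaf_val H (hfIl k)
    refine ⟨h1, ?_⟩
    rw [show ((fL k : Fin n) : ℕ) = LF n d l ((fI k).val + 1) from h1]
    exact h2
  -- entry lemmas
  have hIL : ∀ a b : Fin m, A (fI a) (fL b) = if a = b then 1 else 0 := by
    intro a b
    rw [hA, SimpleGraph.adjMatrix_apply]
    have hiff : (Gr n d l).Adj (fI a) (fL b) ↔ a = b := by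
      rw [adj_leaf_iff H (hfLval b).2, par_cleaf H (hfIl b)]
      constructor
      · intro h
        apply Fin.ext
        have : l + b.val = l + a.val := h
        omega
      · rintro rfl; rfl
    by_cases hab : a = b
    · rw [if_pos (hiff.2 hab), if_pos hab]
    · rw [if_neg (fun hc => hab (hiff.1 hc)), if_neg hab]
  have hLI : ∀ a b : Fin m, A (fL a) (fI b) = if a = b then 1 else 0 := by
    intro a b
    have hsym : A (fL a) (fI b) = A (fI b) (fL a) := by
      rw [hA, SimpleGraph.adjMatrix_apply, SimpleGraph.adjMatrix_apply]
      by_cases hadj : (Gr n d l).Adj (fL a) (fI b)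
      · rw [if_pos hadj, if_pos hadj.symm]
      · rw [if_neg hadj, if_neg (fun hc => hadj hc.symm)]
    rw [hsym, hIL b a]
    by_cases hab : a = b
    · subst hab; rfl
    · rw [if_neg (fun hc => hab hc.symm), if_neg hab]
  have hLL : ∀ a b : Fin m, A (fL a) (fL b) = 0 := by
    intro a b
    rw [hA, SimpleGraph.adjMatrix_apply, if_neg (not_adj_leaves H (hfLval a).2 (hfLval b).2)]
  -- the submatrix
  set f : Fin m ⊕ Fin m → Fin n := Sum.elim fI fL with hfdef
  set A' : Matrix (Fin m) (Fin m) ℚ := A.submatrix fI fI with hA'def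
  have hblocks : A.submatrix f f
      = Matrix.fromBlocks A' (1 : Matrix (Fin m) (Fin m) ℚ) (1 : Matrix (Fin m) (Fin m) ℚ)
          (0 : Matrix (Fin m) (Fin m) ℚ) := by
    ext i j
    cases i with
    | inl a =>
      cases j with
      | inl b => rfl
      | inr b =>
        rw [Matrix.submatrix_apply, Matrix.fromBlocks_apply₁₂, Matrix.one_apply]
        exact hIL a b
    | inr a =>
      cases j with
      | inl b =>
        rw [Matrix.submatrix_apply, Matrix.fromBlocks_apply₂₁, Matrix.one_apply]
        exact hLI a b
      | inr b =>
        rw [Matrix.submatrix_apply, Matrix.fromBlocks_apply₂₂]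
        exact hLL a b
  set C : Matrix (Fin m ⊕ Fin m) (Fin m ⊕ Fin m) ℚ :=
    Matrix.fromBlocks 0 (1 : Matrix (Fin m) (Fin m) ℚ) (1 : Matrix (Fin m) (Fin m) ℚ) (-A')
    with hCdef
  have hBC : A.submatrix f f * C = 1 := by
    rw [hblocks, hCdef, Matrix.fromBlocks_multiply]
    rw [show A' * 0 + 1 * 1 = (1 : Matrix (Fin m) (Fin m) ℚ) by
      rw [Matrix.mul_zero, Matrix.one_mul, zero_add]]
    rw [show A' * 1 + 1 * (-A') = (0 : Matrix (Fin m) (Fin m) ℚ) by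
      rw [Matrix.mul_one, Matrix.one_mul, add_neg_cancel]]
    rw [show (1 : Matrix (Fin m) (Fin m) ℚ) * 0 + 0 * 1 = (0 : Matrix (Fin m) (Fin m) ℚ) by
      rw [Matrix.mul_zero, Matrix.zero_mul, zero_add]]
    rw [show (1 : Matrix (Fin m) (Fin m) ℚ) * 1 + 0 * (-A') = (1 : Matrix (Fin m) (Fin m) ℚ) by
      rw [Matrix.mul_one, Matrix.zero_mul, add_zero]]
    exact Matrix.fromBlocks_one
  have hCB : C * A.submatrix f f = 1 := by
    rw [hblocks, hCdef, Matrix.fromBlocks_multiply]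
    rw [show (0 : Matrix (Fin m) (Fin m) ℚ) * A' + 1 * 1 = (1 : Matrix (Fin m) (Fin m) ℚ) by
      rw [Matrix.zero_mul, Matrix.one_mul, zero_add]]
    rw [show (0 : Matrix (Fin m) (Fin m) ℚ) * 1 + 1 * 0 = (0 : Matrix (Fin m) (Fin m) ℚ) by
      rw [Matrix.zero_mul, Matrix.mul_zero, zero_add]]
    rw [show (1 : Matrix (Fin m) (Fin m) ℚ) * A' + (-A') * 1 = (0 : Matrix (Fin m) (Fin m) ℚ) by
      rw [Matrix.one_mul, Matrix.mul_one, add_neg_cancel]]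
    rw [show (1 : Matrix (Fin m) (Fin m) ℚ) * 1 + (-A') * 0 = (1 : Matrix (Fin m) (Fin m) ℚ) by
      rw [Matrix.mul_one, Matrix.mul_zero, add_zero]]
    exact Matrix.fromBlocks_one
  have hunit : IsUnit (A.submatrix f f) := ⟨⟨A.submatrix f f, C, hBC, hCB⟩, rfl⟩
  have hrankB : (A.submatrix f f).rank = 2 * m := by
    rw [Matrix.rank_of_isUnit _ hunit]
    simp only [Fintype.card_sum, Fintype.card_fin]
    omega
  have hsubeq : A.submatrix f f
      = (1 : Matrix (Fin n) (Fin n) ℚ).submatrix f id * A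
        * (1 : Matrix (Fin n) (Fin n) ℚ).submatrix id f := by
    conv_lhs => rw [show A = 1 * A * 1 by rw [Matrix.one_mul, Matrix.mul_one]]
    rw [Matrix.submatrix_mul _ _ _ id _ Function.bijective_id,
      Matrix.submatrix_mul _ _ _ id _ Function.bijective_id, Matrix.submatrix_id_id]
  have hlower : 2 * m ≤ A.rank := by
    rw [← hrankB, hsubeq]
    exact le_trans (le_trans (Matrix.rank_mul_le _ _) (min_le_left _ _))
      (le_trans (Matrix.rank_mul_le _ _) (min_le_right _ _))
  -- upper bound
  set intF : Finset (Fin n) := (Finset.univ : Finset (Fin n)).filter (fun v => l ≤ v.val)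
    with hintF
  set T : Finset (Fin n → ℚ) :=
    (intF.image (fun q => Aᵀ q)) ∪ (intF.image (fun q => Pi.single q (1 : ℚ))) with hT
  have hcols : ∀ q : Fin n, Aᵀ q ∈ Submodule.span ℚ (T : Set (Fin n → ℚ)) := by
    intro q
    rcases Nat.lt_or_ge q.val l with hq | hq
    · -- leaf column equals a basis vector
      have hqn : q.val < n - 1 := by omega
      have hpn : par n d l q.val < n := by have := par_lt_n H hqn; omega
      set pq : Fin n := ⟨par n d l q.val, hpn⟩ with hpq
      have hcol : Aᵀ q = Pi.single pq (1 : ℚ) := by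
        funext i
        rw [Matrix.transpose_apply, hA, SimpleGraph.adjMatrix_apply, Pi.single_apply]
        by_cases h : par n d l q.val = i.val
        · rw [if_pos ((adj_leaf_iff H hq).2 h), if_pos (Fin.ext h.symm)]
        · rw [if_neg (fun hc => h ((adj_leaf_iff H hq).1 hc)),
            if_neg (fun hc => h (by rw [hc]))]
      rw [hcol]
      apply Submodule.subset_span
      rw [hT]
      simp only [Finset.coe_union, Set.mem_union, Finset.coe_image, Set.mem_image,
        Finset.mem_coe]
      right
      refine ⟨pq, ?_, rfl⟩
      rw [hintF]
      simp only [Finset.mem_filter, Finset.mem_univ, true_and]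
      exact par_ge_l H hqn
    · apply Submodule.subset_span
      rw [hT]
      simp only [Finset.coe_union, Set.mem_union, Finset.coe_image, Set.mem_image,
        Finset.mem_coe]
      left
      refine ⟨q, ?_, rfl⟩
      rw [hintF]
      simp only [Finset.mem_filter, Finset.mem_univ, true_and]
      exact hq
  have hupper : A.rank ≤ 2 * m := by
    rw [Matrix.rank_eq_finrank_span_cols]
    have hspan : Submodule.span ℚ (Set.range Aᵀ) ≤ Submodule.span ℚ (T : Set (Fin n → ℚ)) := by
      rw [Submodule.span_le]
      rintro x ⟨q, rfl⟩
      exact hcols q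
    calc Module.finrank ℚ (Submodule.span ℚ (Set.range Aᵀ))
        ≤ Module.finrank ℚ (Submodule.span ℚ (T : Set (Fin n → ℚ))) :=
          Submodule.finrank_mono hspan
      _ ≤ T.card := finrank_span_finset_le_card T
      _ ≤ 2 * m := by
          have h1 := Finset.card_union_le (intF.image (fun q => Aᵀ q))
            (intF.image (fun q => Pi.single q (1 : ℚ)))
          have h2 := Finset.card_image_le (s := intF) (f := fun q => Aᵀ q)
          have h3 := Finset.card_image_le (s := intF) (f := fun q => Pi.single q (1 : ℚ))
          have h4 : intF.card = n - l := internal_card H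
          rw [hT]
          omega
  omega

/-! ### Bridging the `classical` instances -/

lemma adjMatrix_eq_of_inst {k : ℕ} (G : SimpleGraph (Fin k)) (i1 i2 : DecidableRel G.Adj) :
    @SimpleGraph.adjMatrix ℚ (Fin k) G i1 _ _ = @SimpleGraph.adjMatrix ℚ (Fin k) G i2 _ _ := by
  ext i j
  by_cases h : G.Adj i j
  · simp [SimpleGraph.adjMatrix_apply, h]
  · simp [SimpleGraph.adjMatrix_apply, h]

lemma nullityC_eq {k : ℕ} (G : SimpleGraph (Fin k)) [inst : DecidableRel G.Adj] :
    nullityC G = k - (G.adjMatrix ℚ).rank := by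
  unfold nullityC
  exact congrArg (fun M : Matrix (Fin k) (Fin k) ℚ => k - M.rank)
    (adjMatrix_eq_of_inst G _ _)

lemma degC_eq {k : ℕ} (G : SimpleGraph (Fin k)) [inst : DecidableRel G.Adj] (v : Fin k) :
    degC G v = G.degree v := by
  unfold degC
  congr 1
  exact Subsingleton.elim _ _

/-! ### Building `Good` from the raw hypotheses -/

lemma mkGood (n : ℕ) (d : ℕ → ℕ) (l : ℕ) (hn : 2 < n)
    (hsort : ∀ i j, i ≤ j → j < n → d i ≤ d j)
    (hpos : ∀ i < n, 1 ≤ d i)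
    (hsum : ∑ i ∈ Finset.range n, d i = 2 * n - 2)
    (hl : l = ((Finset.range n).filter fun i => d i = 1).card)
    (hge : (n + 1) / 2 ≤ l) : Good n d l := by
  set S := (Finset.range n).filter fun i => d i = 1 with hS
  have hmemS : ∀ i, i ∈ S ↔ (i < n ∧ d i = 1) := by
    intro i
    rw [hS]
    simp [Finset.mem_filter, Finset.mem_range]
  have hcard : S.card = l := hl.symm
  have hlen : l ≤ n := by
    rw [hl]
    calc ((Finset.range n).filter fun i => d i = 1).card
        ≤ (Finset.range n).card := Finset.card_filter_le _ _
      _ = n := Finset.card_range n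
  have h2l : n ≤ 2 * l := by omega
  have claim1 : ∀ i ∈ S, i < l := by
    intro i hi
    rw [hmemS] at hi
    have hsub : Finset.range (i + 1) ⊆ S := by
      intro j hj
      simp only [Finset.mem_range] at hj
      rw [hmemS]
      have h1 := hsort j i (by omega) hi.1
      have h2 := hpos j (by omega)
      exact ⟨by omega, by omega⟩
    have := Finset.card_le_card hsub
    rw [Finset.card_range, hcard] at this
    omega
  have hd1 : ∀ i < l, d i = 1 := by
    intro i hil
    by_contra hc
    have hin : i < n := by omega
    have hge2 : 2 ≤ d i := by have := hpos i hin; omega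
    have hsub : S ⊆ Finset.range i := by
      intro j hj
      rw [hmemS] at hj
      simp only [Finset.mem_range]
      by_contra hji
      push_neg at hji
      have := hsort i j hji hj.1
      omega
    have := Finset.card_le_card hsub
    rw [Finset.card_range, hcard] at this
    omega
  have hd2 : ∀ k, l ≤ k → k < n → 2 ≤ d k := by
    intro k hk1 hk2
    by_contra hc
    have hd : d k = 1 := by have := hpos k hk2; omega
    have := claim1 k ((hmemS k).2 ⟨hk2, hd⟩)
    omega
  have hln : l < n := by
    rcases Nat.lt_or_ge l n with h | h
    · exact h
    · exfalso
      have hall : ∀ i ∈ Finset.range n, d i = 1 := by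
        intro i hi
        simp only [Finset.mem_range] at hi
        exact hd1 i (by omega)
      rw [Finset.sum_congr rfl hall, Finset.sum_const, Finset.card_range, smul_eq_mul,
        mul_one] at hsum
      omega
  have hsumI : (∑ k ∈ Finset.Ico l n, d k) + l = 2 * n - 2 := by
    have hsp : (∑ k ∈ Finset.Ico 0 l, d k) + ∑ k ∈ Finset.Ico l n, d k
        = ∑ k ∈ Finset.Ico 0 n, d k := Finset.sum_Ico_consecutive _ (by omega) (by omega)
    have hr0 : Finset.Ico 0 l = Finset.range l := by rw [Finset.range_eq_Ico]
    have hr1 : Finset.Ico 0 n = Finset.range n := by rw [Finset.range_eq_Ico]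
    rw [hr0, hr1] at hsp
    have hlow : ∑ k ∈ Finset.range l, d k = l := by
      have hall : ∀ i ∈ Finset.range l, d i = 1 := by
        intro i hi
        simp only [Finset.mem_range] at hi
        exact hd1 i hi
      rw [Finset.sum_congr rfl hall, Finset.sum_const, Finset.card_range, smul_eq_mul,
        mul_one]
    omega
  exact ⟨hn, hln, by omega, h2l, hsort, hd1, hd2, hsumI⟩

end TreeAux

theorem exists_tree_matching_eq_internal (n : ℕ) (d : ℕ → ℕ) (hn : 2 < n)
    (hsort : ∀ i j, i ≤ j → j < n → d i ≤ d j)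
    (hpos : ∀ i < n, 1 ≤ d i)
    (hsum : ∑ i ∈ Finset.range n, d i = 2 * n - 2)
    (l : ℕ) (hl : l = ((Finset.range n).filter fun i => d i = 1).card)
    (hge : (n + 1) / 2 ≤ l) :
    ∃ G : SimpleGraph (Fin n), G.IsTree ∧ HasDegSeq d G ∧
      matchNum G = n - l ∧ nullityC G = 2 * l - n := by
  have H : TreeAux.Good n d l := TreeAux.mkGood n d l hn hsort hpos hsum hl hge
  refine ⟨TreeAux.Gr n d l, TreeAux.isTree H, ⟨Equiv.refl _, fun i => ?_⟩,
    TreeAux.matchNum_eq H, ?_⟩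
  · rw [Equiv.refl_apply, TreeAux.degC_eq, TreeAux.degree_eq H]
  · rw [TreeAux.nullityC_eq, TreeAux.rank_eq H]
    have := H.h2l
    have := H.hln
    omega
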